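/- Let g : ℝ → ℝ be continuously differentiable and let τ, σ, t be real numbers with τ < σ, 0 < σ and 0 ≤ t. Then g(t)·𝟙[τ ≤ t < σ] − g(0)·𝟙[τ < 0] = ∫_0^t g'(s)·𝟙[τ ≤ s < σ] ds + g(τ)·𝟙[0 ≤ τ ≤ t] − g(σ)·𝟙[σ ≤ t]. -/

import Mathlib

open MeasureTheory Set intervalIntegral

lemma key_int (g : ℝ → ℝ) (hg : ContDiff ℝ 1 g) (τ σ t : ℝ) (ht : 0 ≤ t) :
    (∫ s in (0:ℝ)..t, if τ ≤ s ∧ s < σ then deriv g s else 0)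
      = ∫ s in Set.Ioc (max 0 τ) (min t σ), deriv g s := by
  have hfun : (fun s => if τ ≤ s ∧ s < σ then deriv g s else 0)
      = Set.indicator (Set.Ico τ σ) (deriv g) := by
    funext s; simp [Set.indicator, Set.mem_Ico]
  rw [hfun, intervalIntegral.integral_of_le ht,
    MeasureTheory.setIntegral_indicator measurableSet_Ico,
    MeasureTheory.setIntegral_congr_set
      (MeasureTheory.ae_eq_set_inter (MeasureTheory.ae_eq_refl (Ioc (0:ℝ) t)) (Ico_ae_eq_Ioc (μ := volume) (a := τ) (b := σ))),
    Set.Ioc_inter_Ioc]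

theorem stmt1 (g : ℝ → ℝ) (hg : ContDiff ℝ 1 g) (τ σ t : ℝ)
    (hτσ : τ < σ) (hσ : 0 < σ) (ht : 0 ≤ t) :
    (if τ ≤ t ∧ t < σ then g t else 0) - (if τ < 0 then g 0 else 0)
      = (∫ s in (0:ℝ)..t, if τ ≤ s ∧ s < σ then deriv g s else 0)
        + (if 0 ≤ τ ∧ τ ≤ t then g τ else 0)
        - (if σ ≤ t then g σ else 0) := by
  have hcont : Continuous (deriv g) := hg.continuous_deriv le_rfl
  rw [key_int g hg τ σ t ht]
  have hint : ∀ a b : ℝ, a ≤ b → (∫ s in Set.Ioc a b, deriv g s) = g b - g a := by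
    intro a b hab
    rw [← intervalIntegral.integral_of_le hab]
    exact intervalIntegral.integral_deriv_eq_sub
      (fun x _ => hg.differentiable one_ne_zero x)
      (hcont.intervalIntegrable a b)
  by_cases hτt : τ ≤ t
  · have hab : max 0 τ ≤ min t σ := by
      simp [le_min_iff, max_le_iff]; exact ⟨⟨ht, hτt⟩, hσ.le, hτσ.le⟩
    rw [hint _ _ hab]
    by_cases hτ0 : τ < 0
    · have h1 : max 0 τ = 0 := by simp [hτ0.le]
      by_cases hσt : σ ≤ t
      · have h2 : min t σ = σ := by simp [hσt]
        simp [h1, h2, hτ0, not_le.mpr hσ, hσt, not_le.mpr hτ0, lt_irrefl,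
          show ¬ t < σ from not_lt.mpr hσt]
      · have h2 : min t σ = t := by simp [(not_le.mp hσt).le]
        simp [h1, h2, hτ0, hτt, hσt, not_le.mp hσt]
    · push_neg at hτ0
      have h1 : max 0 τ = τ := by simp [hτ0]
      by_cases hσt : σ ≤ t
      · have h2 : min t σ = σ := by simp [hσt]
        simp [h1, h2, hτ0, hτt, hσt, not_lt.mpr hτ0,
          show ¬ t < σ from not_lt.mpr hσt]
      · have h2 : min t σ = t := by simp [(not_le.mp hσt).le]
        simp [h1, h2, hτ0, hτt, hσt, not_lt.mpr hτ0, not_le.mp hσt]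
  · have hempty : Set.Ioc (max 0 τ) (min t σ) = ∅ := by
      apply Set.Ioc_eq_empty
      intro h
      exact hτt (le_trans (le_max_right 0 τ) (h.le.trans (min_le_left t σ)))
    have hτ0 : ¬ τ < 0 := not_lt.mpr (ht.trans ((not_le.mp hτt).le))
    have hσt : ¬ σ ≤ t := fun h => hτt (hτσ.le.trans h)
    simp [hempty, hτt, hτ0, hσt]
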